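/- For each k ∈ ℕ, let v^k be a transferable-utility coalitional game on I = {1,…,N} with nonempty core C(v^k) ≠ ∅, and let M^k : (ℝ^N)^N → (ℝ^N)^N be Lipschitz continuous with a constant L_k ∈ (0,1); set L̄ = sup_k L_k and assume L̄ < 1. Suppose the (unique) fixed point x̄^k of M^k lies in A ∩ (C(v^k))^N, i.e. x̄^k = (c^k,…,c^k) with c^k ∈ C(v^k), and that ‖x̄^{k+1} − x̄^k‖ ≤ δ for all k, where δ ≥ 0. Then for any x^0 ∈ (ℝ^N)^N, the iterates x^{k+1} = M^k(x^k) satisfy ‖x^k − x̄^k‖ ≤ (∏_{i=0}^{k−1} L_i)‖x^0 − x̄^0‖ + δ(1 − L̄^k)/(1 − L̄) for all k ≥ 1, and consequently limsup_{k→∞} dist(x^k, A ∩ (C(v^k))^N) ≤ δ/(1 − L̄). -/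

import Mathlib

/-- The stacked space `(ℝ^N)^N` with the Euclidean norm `‖x‖² = Σ_i ‖x_i‖²`. -/
abbrev Blk (N : ℕ) := PiLp 2 (fun _ : Fin N => EuclideanSpace ℝ (Fin N))

/-- The core of a TU coalitional game `v` on `I = {1,…,N}`:
`C(v) = {x : Σ_i x_i = v(I), Σ_{i∈S} x_i ≥ v(S) for every nonempty S ⊆ I}`. -/
def core {N : ℕ} (v : Finset (Fin N) → ℝ) : Set (EuclideanSpace ℝ (Fin N)) :=
  {x | ∑ i, x i = v Finset.univ ∧
    ∀ S : Finset (Fin N), S.Nonempty → v S ≤ ∑ i ∈ S, x i}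

set_option maxHeartbeats 1000000 in
/-- online core tracking: iterates of the contractions `M^k`, whose fixed
points are consensus core allocations drifting by at most `δ`, satisfy the per-step bound
and `limsup dist(x^k, A ∩ C(v^k)^N) ≤ δ/(1 − L̄)`. -/
theorem stmt_14 (N : ℕ) (hN : 0 < N)
    (v : ℕ → Finset (Fin N) → ℝ) (hv : ∀ k, v k ∅ = 0)
    (hcore : ∀ k, (core (v k)).Nonempty)
    (M : ℕ → Blk N → Blk N) (L : ℕ → ℝ) (hL : ∀ k, 0 < L k ∧ L k < 1)
    (hLip : ∀ k x y, ‖M k x - M k y‖ ≤ L k * ‖x - y‖)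
    (Lbar : ℝ) (hLbar : IsLUB (Set.range L) Lbar) (hLbar1 : Lbar < 1)
    (c : ℕ → EuclideanSpace ℝ (Fin N)) (hc : ∀ k, c k ∈ core (v k))
    (xbar : ℕ → Blk N)
    (hxbar : ∀ k, xbar k =
      (WithLp.equiv 2 ((_ : Fin N) → EuclideanSpace ℝ (Fin N))).symm fun _ => c k)
    (hfix : ∀ k, M k (xbar k) = xbar k)
    (hfixuniq : ∀ k y, M k y = y → y = xbar k)
    (δ : ℝ) (hδ : 0 ≤ δ) (hdrift : ∀ k, ‖xbar (k + 1) - xbar k‖ ≤ δ)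
    (x : ℕ → Blk N) (hx : ∀ k, x (k + 1) = M k (x k)) :
    (∀ k, 1 ≤ k →
      ‖x k - xbar k‖ ≤ (∏ i ∈ Finset.range k, L i) * ‖x 0 - xbar 0‖ +
        δ * (1 - Lbar ^ k) / (1 - Lbar)) ∧
    Filter.atTop.limsup (fun k => Metric.infDist (x k)
        ({y : Blk N | ∀ i j, y i = y j} ∩ {y : Blk N | ∀ i, y i ∈ core (v k)})) ≤
      δ / (1 - Lbar) := by

  have hL0 : ∀ k, 0 < L k := fun k => (hL k).1
  have hLbar_ub : ∀ k, L k ≤ Lbar := fun k => hLbar.1 ⟨k, rfl⟩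
  have hLbar0 : 0 < Lbar := lt_of_lt_of_le (hL0 0) (hLbar_ub 0)
  have h1L : 0 < 1 - Lbar := by linarith
  have hne : Lbar ≠ 1 := ne_of_lt hLbar1
  -- step inequality
  have hstep : ∀ k, ‖x (k+1) - xbar (k+1)‖ ≤ L k * ‖x k - xbar k‖ + δ := by
    intro k
    calc ‖x (k+1) - xbar (k+1)‖
        ≤ ‖x (k+1) - xbar k‖ + ‖xbar k - xbar (k+1)‖ := norm_sub_le_norm_sub_add_norm_sub _ _ _
      _ ≤ L k * ‖x k - xbar k‖ + δ := by
          have h1 : ‖x (k+1) - xbar k‖ ≤ L k * ‖x k - xbar k‖ := by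
            have h := hLip k (x k) (xbar k)
            rwa [hfix k, ← hx k] at h
          have h2 : ‖xbar k - xbar (k+1)‖ ≤ δ := by
            rw [norm_sub_rev]; exact hdrift k
          linarith
  -- main induction with geometric sum
  have hmain : ∀ k, ‖x k - xbar k‖ ≤ (∏ i ∈ Finset.range k, L i) * ‖x 0 - xbar 0‖ +
      δ * (∑ i ∈ Finset.range k, Lbar ^ i) := by
    intro k
    induction k with
    | zero => simp
    | succ k ih =>
      have hsum_nonneg : 0 ≤ ∑ i ∈ Finset.range k, Lbar ^ i :=
        Finset.sum_nonneg fun i _ => pow_nonneg hLbar0.le i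
      have hprod_nonneg : 0 ≤ ∏ i ∈ Finset.range k, L i :=
        Finset.prod_nonneg fun i _ => (hL0 i).le
      calc ‖x (k+1) - xbar (k+1)‖ ≤ L k * ‖x k - xbar k‖ + δ := hstep k
        _ ≤ L k * ((∏ i ∈ Finset.range k, L i) * ‖x 0 - xbar 0‖ +
              δ * (∑ i ∈ Finset.range k, Lbar ^ i)) + δ := by
            have := mul_le_mul_of_nonneg_left ih (hL0 k).le
            linarith
        _ ≤ (∏ i ∈ Finset.range (k+1), L i) * ‖x 0 - xbar 0‖ +
              δ * (∑ i ∈ Finset.range (k+1), Lbar ^ i) := by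
            rw [Finset.prod_range_succ, geom_sum_succ]
            have h0 : L k * ((∏ i ∈ Finset.range k, L i) * ‖x 0 - xbar 0‖) =
                (∏ i ∈ Finset.range k, L i) * L k * ‖x 0 - xbar 0‖ := by ring
            have h1 : L k * (δ * ∑ i ∈ Finset.range k, Lbar ^ i) ≤
                Lbar * (δ * ∑ i ∈ Finset.range k, Lbar ^ i) :=
              mul_le_mul_of_nonneg_right (hLbar_ub k) (mul_nonneg hδ hsum_nonneg)
            have h2 : δ * (Lbar * ∑ i ∈ Finset.range k, Lbar ^ i + 1) =
                Lbar * (δ * ∑ i ∈ Finset.range k, Lbar ^ i) + δ := by ring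
            linarith
  have hgeom : ∀ k : ℕ, δ * (∑ i ∈ Finset.range k, Lbar ^ i) =
      δ * (1 - Lbar ^ k) / (1 - Lbar) := by
    intro k
    have hne' : Lbar - 1 ≠ 0 := sub_ne_zero.mpr hne
    have hne'' : (1:ℝ) - Lbar ≠ 0 := ne_of_gt h1L
    rw [geom_sum_eq hne]
    field_simp
    ring
  have hbound : ∀ k, ‖x k - xbar k‖ ≤ (∏ i ∈ Finset.range k, L i) * ‖x 0 - xbar 0‖ +
      δ * (1 - Lbar ^ k) / (1 - Lbar) := by
    intro k; rw [← hgeom]; exact hmain k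
  refine ⟨fun k _ => hbound k, ?_⟩
  -- limsup part
  set S : ℕ → Set (Blk N) := fun k =>
    ({y : Blk N | ∀ i j, y i = y j} ∩ {y : Blk N | ∀ i, y i ∈ core (v k)}) with hS
  have hmem : ∀ k, xbar k ∈ S k := by
    intro k
    have hxi : ∀ i, xbar k i = c k := by intro i; rw [hxbar k]; rfl
    exact ⟨fun i j => by rw [hxi i, hxi j], fun i => by rw [hxi i]; exact hc k⟩
  set g : ℕ → ℝ := fun k => Lbar ^ k * ‖x 0 - xbar 0‖ + δ / (1 - Lbar) with hg
  have hdg : ∀ k, Metric.infDist (x k) (S k) ≤ g k := by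
    intro k
    have h1 : Metric.infDist (x k) (S k) ≤ ‖x k - xbar k‖ := by
      rw [← dist_eq_norm]; exact Metric.infDist_le_dist_of_mem (hmem k)
    have h2 : (∏ i ∈ Finset.range k, L i) ≤ Lbar ^ k := by
      have := Finset.prod_le_prod (s := Finset.range k) (f := L) (g := fun _ => Lbar)
        (fun i _ => (hL0 i).le) (fun i _ => hLbar_ub i)
      simpa using this
    have h3 : δ * (1 - Lbar ^ k) / (1 - Lbar) ≤ δ / (1 - Lbar) := by
      have hnum : δ * (1 - Lbar ^ k) ≤ δ := by nlinarith [pow_nonneg hLbar0.le k]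
      exact div_le_div_of_nonneg_right hnum h1L.le
    have h4 := hbound k
    have h5 : (∏ i ∈ Finset.range k, L i) * ‖x 0 - xbar 0‖ ≤ Lbar ^ k * ‖x 0 - xbar 0‖ :=
      mul_le_mul_of_nonneg_right h2 (norm_nonneg _)
    simp only [hg]
    linarith
  have htend : Filter.Tendsto g Filter.atTop (nhds (δ / (1 - Lbar))) := by
    have h0 : Filter.Tendsto (fun k => Lbar ^ k) Filter.atTop (nhds 0) :=
      tendsto_pow_atTop_nhds_zero_of_lt_one hLbar0.le hLbar1
    have := (h0.mul_const ‖x 0 - xbar 0‖).add_const (δ / (1 - Lbar))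
    simpa using this
  have hlimsup_g : Filter.atTop.limsup g = δ / (1 - Lbar) := htend.limsup_eq
  calc Filter.atTop.limsup (fun k => Metric.infDist (x k) (S k))
      ≤ Filter.atTop.limsup g := by
        exact Filter.limsup_le_limsup (Filter.Eventually.of_forall hdg)
          (Filter.IsBoundedUnder.isCoboundedUnder_le
            ⟨0, Filter.eventually_map.mpr (Filter.Eventually.of_forall
              fun k => Metric.infDist_nonneg)⟩)
          htend.isBoundedUnder_le
    _ = δ / (1 - Lbar) := hlimsup_g
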